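/- Let p be an odd prime and let a_0, …, a_{p−1} be p-adic integers. Then ∑_{k=0}^{p−1} (C(2k,k)^2 / 16^k) · a_k ≡ A_{(p−1)/2} (mod p^2), where A_j := ∑_{k=0}^j (−1)^k C(j,k) C(j+k,k) a_k. -/

import Mathlib

open Finset Nat

lemma fact_mul_centralBinom (k : ℕ) :
    k ! * Nat.centralBinom k = 2 ^ k * ∏ i ∈ range k, (2 * i + 1) := by
  induction k with
  | zero => simp [Nat.centralBinom]
  | succ k ih =>
    rw [Nat.factorial_succ, mul_comm (k+1), mul_assoc, Nat.succ_mul_centralBinom_succ,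
      prod_range_succ]
    calc k ! * (2 * (2 * k + 1) * Nat.centralBinom k)
        = 2 * (2 * k + 1) * (k ! * Nat.centralBinom k) := by ring
      _ = 2 * (2 * k + 1) * (2 ^ k * ∏ i ∈ range k, (2 * i + 1)) := by rw [ih]
      _ = 2 ^ (k+1) * ((∏ i ∈ range k, (2 * i + 1)) * (2 * k + 1)) := by ring

lemma fact_mul_choose_add (j k : ℕ) :
    k ! * (j + k).choose k = ∏ i ∈ range k, (j + 1 + i) := by
  rw [← Nat.descFactorial_eq_factorial_mul_choose, Nat.descFactorial_eq_prod_range,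
    ← Finset.prod_range_reflect]
  refine prod_congr rfl fun i hi => ?_
  rw [mem_range] at hi
  omega

lemma fact_mul_choose (j k : ℕ) :
    k ! * j.choose k = ∏ i ∈ range k, (j - i) := by
  rw [← Nat.descFactorial_eq_factorial_mul_choose, Nat.descFactorial_eq_prod_range]

lemma key_zmod (p j k : ℕ) (hpp : p.Prime) (hpj : p = 2 * j + 1) (hkj : k ≤ j) :
    (((2 * k).choose k : ZMod (p ^ 2)))^2
      = (-16) ^ k * (j.choose k : ZMod (p^2)) * ((j + k).choose k : ZMod (p^2)) := by
  set R := ZMod (p ^ 2) with hR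
  have hu : IsUnit ((k ! : ℕ) : R) := by
    rw [ZMod.isUnit_iff_coprime]
    apply Nat.Coprime.pow_right
    rw [Nat.coprime_comm]
    exact (Nat.Prime.coprime_iff_not_dvd hpp).mpr (by
      intro h
      exact absurd ((Nat.Prime.dvd_factorial hpp).mp h) (by omega))
  have hp0 : ((p : R)) ^ 2 = 0 := by
    have := ZMod.natCast_self (p ^ 2)
    push_cast at this
    exact this
  refine (hu.pow 2).mul_left_cancel ?_
  have e1 : ((k ! : ℕ) : R) * (((2 * k).choose k : ℕ) : R)
      = 2 ^ k * ∏ i ∈ range k, ((2 * i + 1 : ℕ) : R) := by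
    have h := fact_mul_centralBinom k
    rw [Nat.centralBinom_eq_two_mul_choose] at h
    calc ((k ! : ℕ) : R) * (((2 * k).choose k : ℕ) : R)
        = ((k ! * (2 * k).choose k : ℕ) : R) := by push_cast +zetaDelta; ring
      _ = ((2 ^ k * ∏ i ∈ range k, (2 * i + 1) : ℕ) : R) := by rw [h]
      _ = 2 ^ k * ∏ i ∈ range k, ((2 * i + 1 : ℕ) : R) := by push_cast +zetaDelta; ring
  have e2 : ((k ! : ℕ) : R) * ((j.choose k : ℕ) : R)
      = ∏ i ∈ range k, ((j - i : ℕ) : R) := by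
    calc ((k ! : ℕ) : R) * ((j.choose k : ℕ) : R)
        = ((k ! * j.choose k : ℕ) : R) := by push_cast +zetaDelta; ring
      _ = ((∏ i ∈ range k, (j - i) : ℕ) : R) := by rw [fact_mul_choose]
      _ = ∏ i ∈ range k, ((j - i : ℕ) : R) := by push_cast +zetaDelta; ring
  have e3 : ((k ! : ℕ) : R) * (((j + k).choose k : ℕ) : R)
      = ∏ i ∈ range k, ((j + 1 + i : ℕ) : R) := by
    calc ((k ! : ℕ) : R) * (((j + k).choose k : ℕ) : R)
        = ((k ! * (j + k).choose k : ℕ) : R) := by push_cast +zetaDelta; ring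
      _ = ((∏ i ∈ range k, (j + 1 + i) : ℕ) : R) := by rw [fact_mul_choose_add]
      _ = ∏ i ∈ range k, ((j + 1 + i : ℕ) : R) := by push_cast +zetaDelta; ring
  have factor : ∀ i ∈ range k,
      (16 : R) * ((j - i : ℕ) : R) * ((j + 1 + i : ℕ) : R)
        = -((2 * (2 * i + 1) : ℕ) : R) ^ 2 := by
    intro i hi
    rw [mem_range] at hi
    have hij : i ≤ j := by omega
    have key : (16 : R) * ((j - i : ℕ) : R) * ((j + 1 + i : ℕ) : R)
        + ((2 * (2 * i + 1) : ℕ) : R) ^ 2 = 4 * ((p : R)) ^ 2 := by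
      subst hpj
      push_cast +zetaDelta [Nat.cast_sub hij]
      ring
    rw [hp0, mul_zero] at key
    linear_combination key
  calc (((k ! : ℕ) : R)) ^ 2 * (((2 * k).choose k : ℕ) : R) ^ 2
      = (((k ! : ℕ) : R) * (((2 * k).choose k : ℕ) : R)) ^ 2 := by ring
    _ = (2 ^ k * ∏ i ∈ range k, ((2 * i + 1 : ℕ) : R)) ^ 2 := by rw [e1]
    _ = ∏ i ∈ range k, (4 * ((2 * i + 1 : ℕ) : R) ^ 2) := by
        rw [prod_mul_distrib, prod_const, card_range, prod_pow, mul_pow,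
          ← pow_mul, mul_comm k 2, pow_mul]
        norm_num
    _ = (-1 : R) ^ k * ∏ i ∈ range k, (-((2 * (2 * i + 1) : ℕ) : R) ^ 2) := by
        have h : ∀ i ∈ range k, (-((2 * (2 * i + 1) : ℕ) : R) ^ 2)
            = (-1) * (4 * ((2 * i + 1 : ℕ) : R) ^ 2) := by
          intro i _; push_cast +zetaDelta; ring
        rw [prod_congr rfl h, prod_mul_distrib, prod_const, card_range, prod_mul_distrib,
          prod_const, card_range, ← mul_assoc, ← mul_pow]
        simp +zetaDelta [prod_mul_distrib]
    _ = (-1 : R) ^ k * ∏ i ∈ range k,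
          ((16 : R) * ((j - i : ℕ) : R) * ((j + 1 + i : ℕ) : R)) := by
        rw [prod_congr rfl factor]
    _ = (-16) ^ k * ((∏ i ∈ range k, ((j - i : ℕ) : R)) * ∏ i ∈ range k, ((j + 1 + i : ℕ) : R)) := by
        rw [prod_mul_distrib, prod_mul_distrib, prod_const, card_range,
          show ((-16 : R)) = -1 * 16 by norm_num, mul_pow]
        ring
    _ = ((k ! : ℕ) : R) ^ 2 * ((-16) ^ k * ((j.choose k : ℕ) : R) * (((j + k).choose k : ℕ) : R)) := by
        rw [← e2, ← e3]; ring

/-- The binomial-type transform `A_j = ∑_{k=0}^j (−1)^k C(j,k) C(j+k,k) a_k`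
of a sequence of `p`-adic integers. -/
noncomputable def Atrans (p : ℕ) [Fact p.Prime] (a : ℕ → ℤ_[p]) (j : ℕ) : ℤ_[p] :=
  ∑ k ∈ Finset.range (j + 1), (-1 : ℤ_[p]) ^ k * (j.choose k : ℤ_[p]) * ((j + k).choose k : ℤ_[p]) * a k


lemma dvd2 (p j k : ℕ) (hpp : p.Prime) (hpj : p = 2 * j + 1) (hkj : k ≤ j) :
    ((p : ℤ)) ^ 2 ∣ (((2 * k).choose k : ℤ)) ^ 2
      - (-16) ^ k * (j.choose k : ℤ) * ((j + k).choose k : ℤ) := by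
  have h := key_zmod p j k hpp hpj hkj
  have h0 : ((((2 * k).choose k : ℤ)) ^ 2
      - (-16) ^ k * (j.choose k : ℤ) * ((j + k).choose k : ℤ) : ℤ) = 0
      → True := fun _ => trivial
  have hz : (((((2 * k).choose k : ℤ)) ^ 2
      - (-16) ^ k * (j.choose k : ℤ) * ((j + k).choose k : ℤ) : ℤ) : ZMod (p ^ 2)) = 0 := by
    push_cast
    rw [h]
    ring
  have hdvd := (ZMod.intCast_zmod_eq_zero_iff_dvd _ (p ^ 2)).mp hz
  have : ((p ^ 2 : ℕ) : ℤ) = (p : ℤ) ^ 2 := by push_cast; ring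
  rwa [this] at hdvd

theorem stmt9 (p : ℕ) [Fact p.Prime] (hp : p ≠ 2) (a : ℕ → ℤ_[p]) :
    ‖(∑ k ∈ Finset.range p,
        (((2 * k).choose k : ℚ_[p])) ^ 2 / (16 : ℚ_[p]) ^ k * (a k : ℚ_[p]))
      - ((Atrans p a ((p - 1) / 2) : ℚ_[p]))‖ ≤ (p : ℝ) ^ (-2 : ℤ) := by
  have hpp : p.Prime := Fact.out
  obtain ⟨j, hpj⟩ : ∃ j, p = 2 * j + 1 := by
    obtain ⟨j, hj⟩ := hpp.odd_of_ne_two hp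
    exact ⟨j, hj⟩
  rw [show (p - 1) / 2 = j from by omega]
  have h16 : ‖(16 : ℚ_[p])‖ = 1 := by
    have hle : ‖(16 : ℚ_[p])‖ ≤ 1 := by
      have := Padic.norm_int_le_one (p := p) 16
      norm_num at this ⊢
      exact this
    rcases lt_or_eq_of_le hle with hlt | heq
    · exfalso
      have hd : (p : ℤ) ∣ 16 := by
        have h' : ‖((16 : ℤ) : ℚ_[p])‖ < 1 := by norm_num; exact hlt
        exact (Padic.norm_intCast_lt_one_iff (k := 16)).mp h'
      have hd' : p ∣ 16 := by exact_mod_cast hd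
      rw [show (16 : ℕ) = 2 ^ 4 by norm_num] at hd'
      have := hpp.dvd_of_dvd_pow hd'
      have := Nat.le_of_dvd (by norm_num) this
      have := hpp.two_le
      omega
    · exact heq
  -- rewrite Atrans
  have hA : ((Atrans p a j : ℤ_[p]) : ℚ_[p])
      = ∑ k ∈ range (j + 1),
          (-1 : ℚ_[p]) ^ k * (j.choose k : ℚ_[p]) * ((j + k).choose k : ℚ_[p]) * (a k : ℚ_[p]) := by
    rw [show ((Atrans p a j : ℤ_[p]) : ℚ_[p]) = PadicInt.Coe.ringHom (Atrans p a j) from rfl,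
      Atrans, map_sum]
    refine sum_congr rfl fun k hk => ?_
    push_cast [PadicInt.Coe.ringHom]
    rfl
  set g : ℕ → ℚ_[p] := fun k =>
    (if k ≤ j then (-1 : ℚ_[p]) ^ k * (j.choose k : ℚ_[p]) * ((j + k).choose k : ℚ_[p]) else 0)
      * (a k : ℚ_[p]) with hgdef
  have hsum : ((Atrans p a j : ℤ_[p]) : ℚ_[p]) = ∑ k ∈ range p, g k := by
    rw [hA]
    rw [← Finset.sum_subset (Finset.range_subset_range.mpr (show j + 1 ≤ p by omega))
      (fun x _ hx => by
        rw [mem_range, not_lt] at hx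
        simp [hgdef, show ¬ x ≤ j by omega])]
    refine sum_congr rfl fun k hk => ?_
    rw [mem_range] at hk
    simp [hgdef, show k ≤ j by omega]
  rw [hsum, ← Finset.sum_sub_distrib]
  refine IsUltrametricDist.norm_sum_le_of_forall_le_of_nonneg (by positivity) fun k hk => ?_
  rw [mem_range] at hk
  have hbound : ∀ c : ℚ_[p], ‖c‖ ≤ (p : ℝ) ^ (-2 : ℤ) →
      ‖c * (a k : ℚ_[p])‖ ≤ (p : ℝ) ^ (-2 : ℤ) := fun c hc => by
    rw [Padic.padicNormE.mul]
    calc ‖c‖ * ‖((a k : ℤ_[p]) : ℚ_[p])‖ ≤ ‖c‖ * 1 := by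
          apply mul_le_mul_of_nonneg_left _ (norm_nonneg c)
          rw [PadicInt.padic_norm_e_of_padicInt]
          exact PadicInt.norm_le_one _
      _ ≤ (p : ℝ) ^ (-2 : ℤ) := by rw [mul_one]; exact hc
  by_cases hkj : k ≤ j
  · have hterm : ((2 * k).choose k : ℚ_[p]) ^ 2 / (16 : ℚ_[p]) ^ k * (a k : ℚ_[p]) - g k
        = ((((2 * k).choose k : ℤ) ^ 2
            - (-16) ^ k * (j.choose k : ℤ) * ((j + k).choose k : ℤ) : ℤ) : ℚ_[p])
          / (16 : ℚ_[p]) ^ k * (a k : ℚ_[p]) := by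
      simp only [hgdef, if_pos hkj]
      have h16ne : (16 : ℚ_[p]) ^ k ≠ 0 := by
        apply pow_ne_zero; intro h; rw [h] at h16; simp at h16
      push_cast
      field_simp
      rw [show ((-16 : ℚ_[p])) = (-1) * 16 by norm_num, mul_pow]
      ring
    rw [hterm]
    apply hbound
    rw [norm_div, norm_pow, h16, one_pow, div_one]
    obtain ⟨m, hm⟩ := dvd2 p j k hpp hpj hkj
    rw [hm]
    push_cast
    calc ‖(p : ℚ_[p]) ^ 2 * (m : ℚ_[p])‖
        = ‖(p : ℚ_[p]) ^ 2‖ * ‖(m : ℚ_[p])‖ := Padic.padicNormE.mul _ _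
      _ ≤ ‖(p : ℚ_[p]) ^ 2‖ * 1 :=
          mul_le_mul_of_nonneg_left (Padic.norm_int_le_one m) (norm_nonneg _)
      _ = (p : ℝ) ^ (-2 : ℤ) := by
          rw [mul_one]
          simpa using Padic.norm_p_pow (p := p) 2
  · have hterm : ((2 * k).choose k : ℚ_[p]) ^ 2 / (16 : ℚ_[p]) ^ k * (a k : ℚ_[p]) - g k
        = ((2 * k).choose k : ℚ_[p]) ^ 2 / (16 : ℚ_[p]) ^ k * (a k : ℚ_[p]) := by
      simp [hgdef, hkj]
    rw [hterm]
    apply hbound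
    obtain ⟨m, hm⟩ := hpp.dvd_choose (show k < p by omega) (show 2 * k - k < p by omega)
      (show p ≤ 2 * k by omega)
    rw [norm_div, norm_pow, norm_pow, h16, one_pow, div_one, hm]
    push_cast
    rw [Padic.padicNormE.mul]
    calc (‖(p : ℚ_[p])‖ * ‖(m : ℚ_[p])‖) ^ 2 ≤ (‖(p : ℚ_[p])‖ * 1) ^ 2 := by
          apply pow_le_pow_left₀ (by positivity)
          apply mul_le_mul_of_nonneg_left _ (norm_nonneg _)
          exact_mod_cast Padic.norm_int_le_one (p := p) m
      _ = ‖(p : ℚ_[p]) ^ 2‖ := by rw [mul_one, norm_pow]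
      _ = (p : ℝ) ^ (-2 : ℤ) := by simpa using Padic.norm_p_pow (p := p) 2
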